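/- Euler's Telescoping Lemma: Let u and v be sequences in a field with v_k nonzero for all k, and define w_k = u_k - v_k. Then for all n ≥ 1, the sum over k from 1 to n of w_k * (u_1 * ... * u_{k-1}) / (v_1 * ... * v_k) equals (u_1 * ... * u_n) / (v_1 * ... * v_n) - 1, where the empty product is 1. -/

import Mathlib

theorem euler_telescoping {F : Type*} [Field F] (u v : ℕ → F)
    (hv : ∀ k, v k ≠ 0) (n : ℕ) (hn : 1 ≤ n) :
    ∑ k ∈ Finset.Icc 1 n,
        (u k - v k) * (∏ i ∈ Finset.Icc 1 (k - 1), u i) / (∏ i ∈ Finset.Icc 1 k, v i) =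
      (∏ i ∈ Finset.Icc 1 n, u i) / (∏ i ∈ Finset.Icc 1 n, v i) - 1 := by
  induction n with
  | zero => omega
  | succ m ih =>
    rcases Nat.eq_or_lt_of_le hn with h | h
    · have hm0 : m = 0 := by omega
      subst hm0
      simp [Finset.Icc_self]
      rw [sub_div, div_self (hv 1)]
    · have hm : 1 ≤ m := by omega
      rw [Finset.sum_Icc_succ_top (by omega), ih hm]
      have hPv : (∏ i ∈ Finset.Icc 1 m, v i) ≠ 0 := Finset.prod_ne_zero_iff.mpr fun i _ => hv i
      rw [Finset.prod_Icc_succ_top (by omega : 1 ≤ m + 1),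
          Finset.prod_Icc_succ_top (by omega : 1 ≤ m + 1)]
      simp only [Nat.add_sub_cancel]
      set A := ∏ i ∈ Finset.Icc 1 m, u i
      set B := ∏ i ∈ Finset.Icc 1 m, v i
      have h1 : A / B = A * v (m + 1) / (B * v (m + 1)) := by
        rw [mul_div_mul_right _ _ (hv (m + 1))]
      rw [h1, mul_comm (u (m+1) - v (m+1)) A, mul_div_assoc, ← mul_div_assoc,
        sub_add_eq_add_sub, ← add_div]
      ring_nf
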